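/- Let A, B, C be affinely independent points of the Euclidean plane forming a triangle that is obtuse at B, i.e., ⟪A−B, C−B⟫ < 0. Let A′ be the orthogonal projection of A onto the line through B and C, B′ the orthogonal projection of B onto the line through A and C, and C′ the orthogonal projection of C onto the line through A and B. Then A′, B′, C′ are affinely independent, and the incenter of triangle A′B′C′ equals B. -/

import Mathlib

noncomputable section

/-- The standard inner product on `ℝ²`. -/
def dot (p q : ℝ × ℝ) : ℝ := p.1 * q.1 + p.2 * q.2

/-- The Euclidean length of a vector of `ℝ²`. -/
def elen (p : ℝ × ℝ) : ℝ := Real.sqrt (dot p p)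

/-- The orthogonal projection of the point `P` onto the line through `A` and `B`. -/
def projLine (P A B : ℝ × ℝ) : ℝ × ℝ :=
  A + (dot (P - A) (B - A) / dot (B - A) (B - A)) • (B - A)

/-- The incenter of the triangle `V₁V₂V₃`: the weighted average of the vertices,
each weighted by the length of the opposite side. -/
def incenter (V₁ V₂ V₃ : ℝ × ℝ) : ℝ × ℝ :=
  (elen (V₂ - V₃) + elen (V₁ - V₃) + elen (V₁ - V₂))⁻¹ •
    (elen (V₂ - V₃) • V₁ + elen (V₁ - V₃) • V₂ + elen (V₁ - V₂) • V₃)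

lemma collinear3 (P Q R : ℝ × ℝ) :
    Collinear ℝ ({P, Q, R} : Set (ℝ × ℝ)) ↔
      (Q.1 - P.1) * (R.2 - P.2) - (Q.2 - P.2) * (R.1 - P.1) = 0 := by
  rw [collinear_iff_of_mem (Set.mem_insert P _)]
  constructor
  · rintro ⟨v, hv⟩
    obtain ⟨rq, hq⟩ := hv Q (by simp)
    obtain ⟨rr, hr⟩ := hv R (by simp)
    rw [hq, hr]
    simp only [vadd_eq_add, Prod.fst_add, Prod.snd_add, Prod.smul_fst, Prod.smul_snd,
      smul_eq_mul]
    ring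
  · intro h
    by_cases hQ : Q = P
    · refine ⟨R - P, fun p hp => ?_⟩
      simp only [Set.mem_insert_iff, Set.mem_singleton_iff] at hp
      rcases hp with rfl | rfl | rfl
      · exact ⟨0, by simp⟩
      · exact ⟨0, by simp [hQ]⟩
      · exact ⟨1, by simp⟩
    · refine ⟨Q - P, fun p hp => ?_⟩
      have ht : ∃ t : ℝ, R - P = t • (Q - P) := by
        by_cases h1 : Q.1 - P.1 = 0
        · have h2 : Q.2 - P.2 ≠ 0 := by
            intro h2
            exact hQ (Prod.ext (by linarith) (by linarith))
          refine ⟨(R.2 - P.2) / (Q.2 - P.2), Prod.ext ?_ ?_⟩ <;>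
            simp only [Prod.fst_sub, Prod.snd_sub, Prod.smul_fst, Prod.smul_snd, smul_eq_mul]
          · field_simp
            nlinarith [h]
          · field_simp
        · refine ⟨(R.1 - P.1) / (Q.1 - P.1), Prod.ext ?_ ?_⟩ <;>
            simp only [Prod.fst_sub, Prod.snd_sub, Prod.smul_fst, Prod.smul_snd, smul_eq_mul]
          · field_simp
          · field_simp
            nlinarith [h]
      obtain ⟨t, htt⟩ := ht
      simp only [Set.mem_insert_iff, Set.mem_singleton_iff] at hp
      rcases hp with rfl | rfl | rfl
      · exact ⟨0, by simp⟩
      · exact ⟨1, by simp⟩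
      · exact ⟨t, by rw [← htt]; simp⟩


set_option maxHeartbeats 2000000 in
lemma orthic_main (b1 b2 u1 u2 v1 v2 : ℝ)
    (hk : u1 * v2 - u2 * v1 ≠ 0)
    (hp : (u1*v1+u2*v2) < 0) :
    AffineIndependent ℝ ![projLine (b1+u1, b2+u2) (b1, b2) (b1+v1, b2+v2),
        projLine (b1, b2) (b1+u1, b2+u2) (b1+v1, b2+v2),
        projLine (b1+v1, b2+v2) (b1+u1, b2+u2) (b1, b2)] ∧
    incenter (projLine (b1+u1, b2+u2) (b1, b2) (b1+v1, b2+v2))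
        (projLine (b1, b2) (b1+u1, b2+u2) (b1+v1, b2+v2))
        (projLine (b1+v1, b2+v2) (b1+u1, b2+u2) (b1, b2)) = (b1, b2) := by
  have hk2 : 0 < (u1*v2 - u2*v1)*(u1*v2 - u2*v1) := mul_self_pos.2 hk
  have hX : 0 < (u1*u1+u2*u2) := by nlinarith [sq_nonneg v1, sq_nonneg v2, sq_nonneg u1, sq_nonneg u2, sq_nonneg (u1*v1+u2*v2)]
  have hY : 0 < (v1*v1+v2*v2) := by nlinarith [sq_nonneg v1, sq_nonneg v2, sq_nonneg u1, sq_nonneg u2, sq_nonneg (u1*v1+u2*v2)]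
  have hD : 0 < ((u1*u1+u2*u2)+(v1*v1+v2*v2)-2*(u1*v1+u2*v2)) := by linarith
  have hX0 : (u1*u1+u2*u2) ≠ 0 := ne_of_gt hX
  have hY0 : (v1*v1+v2*v2) ≠ 0 := ne_of_gt hY
  have hD0 : ((u1*u1+u2*u2)+(v1*v1+v2*v2)-2*(u1*v1+u2*v2)) ≠ 0 := ne_of_gt hD
  have hD0' : (v1 - u1) * (v1 - u1) + (v2 - u2) * (v2 - u2) ≠ 0 := by
    intro h; apply hD0; linarith [h]
  have hXP : 0 < (u1*u1+u2*u2) - (u1*v1+u2*v2) := by linarith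
  have hX2 : u1^2+u2^2 ≠ 0 := by nlinarith
  have hY2 : v1^2+v2^2 ≠ 0 := by nlinarith
  have hD2 : u1^2+u2^2+(v1^2+v2^2)-2*(u1*v1+u2*v2) ≠ 0 := by nlinarith
  have hYP : 0 < (v1*v1+v2*v2) - (u1*v1+u2*v2) := by linarith
  have hAf : projLine (b1+u1, b2+u2) (b1, b2) (b1+v1, b2+v2) = (b1 + (u1*v1+u2*v2)/(v1*v1+v2*v2)*v1, b2 + (u1*v1+u2*v2)/(v1*v1+v2*v2)*v2) := by
    unfold projLine dot
    simp only [Prod.mk_sub_mk, Prod.mk_add_mk, Prod.smul_mk, smul_eq_mul,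
      add_sub_cancel_left, Prod.mk.injEq] <;> constructor <;> (field_simp; try ring)
  have hBf : projLine (b1, b2) (b1+u1, b2+u2) (b1+v1, b2+v2) = (b1 + ((v1*v1+v2*v2)-(u1*v1+u2*v2))/((u1*u1+u2*u2)+(v1*v1+v2*v2)-2*(u1*v1+u2*v2))*u1 + ((u1*u1+u2*u2)-(u1*v1+u2*v2))/((u1*u1+u2*u2)+(v1*v1+v2*v2)-2*(u1*v1+u2*v2))*v1, b2 + ((v1*v1+v2*v2)-(u1*v1+u2*v2))/((u1*u1+u2*u2)+(v1*v1+v2*v2)-2*(u1*v1+u2*v2))*u2 + ((u1*u1+u2*u2)-(u1*v1+u2*v2))/((u1*u1+u2*u2)+(v1*v1+v2*v2)-2*(u1*v1+u2*v2))*v2) := by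
    unfold projLine dot
    simp only [Prod.mk_sub_mk, Prod.mk_add_mk, Prod.smul_mk, smul_eq_mul,
      add_sub_add_left_eq_sub, sub_add_cancel_left, Prod.mk.injEq] <;> constructor <;> (field_simp (discharger := first | assumption | (apply ne_of_gt; nlinarith [hX, hY, hD]) | nlinarith [hX, hY, hD]); try ring)
  have hCf : projLine (b1+v1, b2+v2) (b1+u1, b2+u2) (b1, b2) = (b1 + (u1*v1+u2*v2)/(u1*u1+u2*u2)*u1, b2 + (u1*v1+u2*v2)/(u1*u1+u2*u2)*u2) := by
    unfold projLine dot
    simp only [Prod.mk_sub_mk, Prod.mk_add_mk, Prod.smul_mk, smul_eq_mul,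
      add_sub_add_left_eq_sub, sub_add_cancel_left, neg_mul_neg, Prod.mk.injEq] <;> constructor <;> (field_simp; try ring)
  obtain ⟨a, ha, ha0⟩ : ∃ a : ℝ, a * a = (u1*u1+u2*u2) ∧ 0 < a :=
    ⟨Real.sqrt (u1*u1+u2*u2), Real.mul_self_sqrt hX.le, Real.sqrt_pos.2 hX⟩
  obtain ⟨b, hb, hb0⟩ : ∃ b : ℝ, b * b = (v1*v1+v2*v2) ∧ 0 < b :=
    ⟨Real.sqrt (v1*v1+v2*v2), Real.mul_self_sqrt hY.le, Real.sqrt_pos.2 hY⟩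
  obtain ⟨e, he, he0⟩ : ∃ e : ℝ, e * e = ((u1*u1+u2*u2)+(v1*v1+v2*v2)-2*(u1*v1+u2*v2)) ∧ 0 < e :=
    ⟨Real.sqrt ((u1*u1+u2*u2)+(v1*v1+v2*v2)-2*(u1*v1+u2*v2)), Real.mul_self_sqrt hD.le, Real.sqrt_pos.2 hD⟩
  have ha0' : a ≠ 0 := ne_of_gt ha0
  have hb0' : b ≠ 0 := ne_of_gt hb0
  have he0' : e ≠ 0 := ne_of_gt he0
  have hw1 : 0 < ((u1*u1+u2*u2)-(u1*v1+u2*v2))*b/(a*e) := div_pos (mul_pos hXP hb0) (mul_pos ha0 he0)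
  have hw2 : 0 < (-(u1*v1+u2*v2))*e/(a*b) := div_pos (mul_pos (neg_pos.2 hp) he0) (mul_pos ha0 hb0)
  have hw3 : 0 < ((v1*v1+v2*v2)-(u1*v1+u2*v2))*a/(b*e) := div_pos (mul_pos hYP ha0) (mul_pos hb0 he0)
  have d1 : dot ((b1 + ((v1*v1+v2*v2)-(u1*v1+u2*v2))/((u1*u1+u2*u2)+(v1*v1+v2*v2)-2*(u1*v1+u2*v2))*u1 + ((u1*u1+u2*u2)-(u1*v1+u2*v2))/((u1*u1+u2*u2)+(v1*v1+v2*v2)-2*(u1*v1+u2*v2))*v1, b2 + ((v1*v1+v2*v2)-(u1*v1+u2*v2))/((u1*u1+u2*u2)+(v1*v1+v2*v2)-2*(u1*v1+u2*v2))*u2 + ((u1*u1+u2*u2)-(u1*v1+u2*v2))/((u1*u1+u2*u2)+(v1*v1+v2*v2)-2*(u1*v1+u2*v2))*v2) - (b1 + (u1*v1+u2*v2)/(u1*u1+u2*u2)*u1, b2 + (u1*v1+u2*v2)/(u1*u1+u2*u2)*u2)) ((b1 + ((v1*v1+v2*v2)-(u1*v1+u2*v2))/((u1*u1+u2*u2)+(v1*v1+v2*v2)-2*(u1*v1+u2*v2))*u1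 + ((u1*u1+u2*u2)-(u1*v1+u2*v2))/((u1*u1+u2*u2)+(v1*v1+v2*v2)-2*(u1*v1+u2*v2))*v1, b2 + ((v1*v1+v2*v2)-(u1*v1+u2*v2))/((u1*u1+u2*u2)+(v1*v1+v2*v2)-2*(u1*v1+u2*v2))*u2 + ((u1*u1+u2*u2)-(u1*v1+u2*v2))/((u1*u1+u2*u2)+(v1*v1+v2*v2)-2*(u1*v1+u2*v2))*v2) - (b1 + (u1*v1+u2*v2)/(u1*u1+u2*u2)*u1, b2 + (u1*v1+u2*v2)/(u1*u1+u2*u2)*u2))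
      = ((u1*u1+u2*u2)-(u1*v1+u2*v2))*((u1*u1+u2*u2)-(u1*v1+u2*v2))*(v1*v1+v2*v2)/((u1*u1+u2*u2)*((u1*u1+u2*u2)+(v1*v1+v2*v2)-2*(u1*v1+u2*v2))) := by
    unfold dot
    simp only [Prod.mk_sub_mk]
    field_simp (discharger := first | assumption | (apply ne_of_gt; nlinarith [hX, hY, hD]) | nlinarith [hX, hY, hD])
    ring
  have d2 : dot ((b1 + (u1*v1+u2*v2)/(v1*v1+v2*v2)*v1, b2 + (u1*v1+u2*v2)/(v1*v1+v2*v2)*v2) - (b1 + (u1*v1+u2*v2)/(u1*u1+u2*u2)*u1, b2 + (u1*v1+u2*v2)/(u1*u1+u2*u2)*u2)) ((b1 + (u1*v1+u2*v2)/(v1*v1+v2*v2)*v1, b2 + (u1*v1+u2*v2)/(v1*v1+v2*v2)*v2) - (b1 + (u1*v1+u2*v2)/(u1*u1+u2*u2)*u1, b2 + (u1*v1+u2*v2)/(u1*u1+u2*u2)*u2))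
      = (u1*v1+u2*v2)*(u1*v1+u2*v2)*((u1*u1+u2*u2)+(v1*v1+v2*v2)-2*(u1*v1+u2*v2))/((u1*u1+u2*u2)*(v1*v1+v2*v2)) := by
    unfold dot
    simp only [Prod.mk_sub_mk]
    field_simp (discharger := first | assumption | (apply ne_of_gt; nlinarith [hX, hY, hD]) | nlinarith [hX, hY, hD])
    ring
  have d3 : dot ((b1 + (u1*v1+u2*v2)/(v1*v1+v2*v2)*v1, b2 + (u1*v1+u2*v2)/(v1*v1+v2*v2)*v2) - (b1 + ((v1*v1+v2*v2)-(u1*v1+u2*v2))/((u1*u1+u2*u2)+(v1*v1+v2*v2)-2*(u1*v1+u2*v2))*u1 + ((u1*u1+u2*u2)-(u1*v1+u2*v2))/((u1*u1+u2*u2)+(v1*v1+v2*v2)-2*(u1*v1+u2*v2))*v1, b2 + ((v1*v1+v2*v2)-(u1*v1+u2*v2))/((u1*u1+u2*u2)+(v1*v1+v2*v2)-2*(u1*v1+u2*v2))*u2 + ((u1*u1+u2*u2)-(u1*v1+u2*v2))/((u1*u1+u2*u2)+(v1*v1+v2*v2)-2*(u1*v1+u2*v2))*v2)) ((b1 + (u1*v1+u2*v2)/(v1*v1+v2*v2)*v1,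 b2 + (u1*v1+u2*v2)/(v1*v1+v2*v2)*v2) - (b1 + ((v1*v1+v2*v2)-(u1*v1+u2*v2))/((u1*u1+u2*u2)+(v1*v1+v2*v2)-2*(u1*v1+u2*v2))*u1 + ((u1*u1+u2*u2)-(u1*v1+u2*v2))/((u1*u1+u2*u2)+(v1*v1+v2*v2)-2*(u1*v1+u2*v2))*v1, b2 + ((v1*v1+v2*v2)-(u1*v1+u2*v2))/((u1*u1+u2*u2)+(v1*v1+v2*v2)-2*(u1*v1+u2*v2))*u2 + ((u1*u1+u2*u2)-(u1*v1+u2*v2))/((u1*u1+u2*u2)+(v1*v1+v2*v2)-2*(u1*v1+u2*v2))*v2))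
      = ((v1*v1+v2*v2)-(u1*v1+u2*v2))*((v1*v1+v2*v2)-(u1*v1+u2*v2))*(u1*u1+u2*u2)/((v1*v1+v2*v2)*((u1*u1+u2*u2)+(v1*v1+v2*v2)-2*(u1*v1+u2*v2))) := by
    unfold dot
    simp only [Prod.mk_sub_mk]
    field_simp (discharger := first | assumption | (apply ne_of_gt; nlinarith [hX, hY, hD]) | nlinarith [hX, hY, hD])
    ring
  have h1 : elen ((b1 + ((v1*v1+v2*v2)-(u1*v1+u2*v2))/((u1*u1+u2*u2)+(v1*v1+v2*v2)-2*(u1*v1+u2*v2))*u1 + ((u1*u1+u2*u2)-(u1*v1+u2*v2))/((u1*u1+u2*u2)+(v1*v1+v2*v2)-2*(u1*v1+u2*v2))*v1, b2 + ((v1*v1+v2*v2)-(u1*v1+u2*v2))/((u1*u1+u2*u2)+(v1*v1+v2*v2)-2*(u1*v1+u2*v2))*u2 + ((u1*u1+u2*u2)-(u1*v1+u2*v2))/((u1*u1+u2*u2)+(v1*v1+v2*v2)-2*(u1*v1+u2*v2))*v2) - (b1 + (u1*v1+u2*v2)/(u1*u1+u2*u2)*u1, b2 + (u1*v1+u2*v2)/(u1*u1+u2*u2)*u2))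 = ((u1*u1+u2*u2)-(u1*v1+u2*v2))*b/(a*e) := by
    rw [elen, d1, show ((u1*u1+u2*u2)-(u1*v1+u2*v2))*((u1*u1+u2*u2)-(u1*v1+u2*v2))*(v1*v1+v2*v2)/((u1*u1+u2*u2)*((u1*u1+u2*u2)+(v1*v1+v2*v2)-2*(u1*v1+u2*v2))) = (((u1*u1+u2*u2)-(u1*v1+u2*v2))*b/(a*e))^2 by
      rw [← he, ← ha, ← hb]; ring]
    exact Real.sqrt_sq hw1.le
  have h2 : elen ((b1 + (u1*v1+u2*v2)/(v1*v1+v2*v2)*v1, b2 + (u1*v1+u2*v2)/(v1*v1+v2*v2)*v2) - (b1 + (u1*v1+u2*v2)/(u1*u1+u2*u2)*u1, b2 + (u1*v1+u2*v2)/(u1*u1+u2*u2)*u2)) = (-(u1*v1+u2*v2))*e/(a*b) := by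
    rw [elen, d2, show (u1*v1+u2*v2)*(u1*v1+u2*v2)*((u1*u1+u2*u2)+(v1*v1+v2*v2)-2*(u1*v1+u2*v2))/((u1*u1+u2*u2)*(v1*v1+v2*v2)) = ((-(u1*v1+u2*v2))*e/(a*b))^2 by
      rw [← he, ← ha, ← hb]; ring]
    exact Real.sqrt_sq hw2.le
  have h3 : elen ((b1 + (u1*v1+u2*v2)/(v1*v1+v2*v2)*v1, b2 + (u1*v1+u2*v2)/(v1*v1+v2*v2)*v2) - (b1 + ((v1*v1+v2*v2)-(u1*v1+u2*v2))/((u1*u1+u2*u2)+(v1*v1+v2*v2)-2*(u1*v1+u2*v2))*u1 + ((u1*u1+u2*u2)-(u1*v1+u2*v2))/((u1*u1+u2*u2)+(v1*v1+v2*v2)-2*(u1*v1+u2*v2))*v1, b2 + ((v1*v1+v2*v2)-(u1*v1+u2*v2))/((u1*u1+u2*u2)+(v1*v1+v2*v2)-2*(u1*v1+u2*v2))*u2 + ((u1*u1+u2*u2)-(u1*v1+u2*v2))/((u1*u1+u2*u2)+(v1*v1+v2*v2)-2*(u1*v1+u2*v2))*v2)) = ((v1*v1+v2*v2)-(u1*v1+u2*v2))*a/(b*e)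 := by
    rw [elen, d3, show ((v1*v1+v2*v2)-(u1*v1+u2*v2))*((v1*v1+v2*v2)-(u1*v1+u2*v2))*(u1*u1+u2*u2)/((v1*v1+v2*v2)*((u1*u1+u2*u2)+(v1*v1+v2*v2)-2*(u1*v1+u2*v2))) = (((v1*v1+v2*v2)-(u1*v1+u2*v2))*a/(b*e))^2 by
      rw [← he, ← ha, ← hb]; ring]
    exact Real.sqrt_sq hw3.le
  constructor
  · rw [hAf, hBf, hCf, affineIndependent_iff_not_collinear_set]
    intro hcol
    have hcr := (collinear3 (b1 + (u1*v1+u2*v2)/(v1*v1+v2*v2)*v1, b2 + (u1*v1+u2*v2)/(v1*v1+v2*v2)*v2) (b1 + ((v1*v1+v2*v2)-(u1*v1+u2*v2))/((u1*u1+u2*u2)+(v1*v1+v2*v2)-2*(u1*v1+u2*v2))*u1 + ((u1*u1+u2*u2)-(u1*v1+u2*v2))/((u1*u1+u2*u2)+(v1*v1+v2*v2)-2*(u1*v1+u2*v2))*v1, b2 + ((v1*v1+v2*v2)-(u1*v1+u2*v2))/((u1*u1+u2*u2)+(v1*v1+v2*v2)-2*(u1*v1+u2*v2))*u2 + ((u1*u1+u2*u2)-(u1*v1+u2*v2))/((u1*u1+u2*u2)+(v1*v1+v2*v2)-2*(u1*v1+u2*v2))*v2)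 (b1 + (u1*v1+u2*v2)/(u1*u1+u2*u2)*u1, b2 + (u1*v1+u2*v2)/(u1*u1+u2*u2)*u2)).1 hcol
    dsimp only at hcr
    have hval : ((b1 + ((v1*v1+v2*v2)-(u1*v1+u2*v2))/((u1*u1+u2*u2)+(v1*v1+v2*v2)-2*(u1*v1+u2*v2))*u1 + ((u1*u1+u2*u2)-(u1*v1+u2*v2))/((u1*u1+u2*u2)+(v1*v1+v2*v2)-2*(u1*v1+u2*v2))*v1) - (b1 + (u1*v1+u2*v2)/(v1*v1+v2*v2)*v1)) * ((b2 + (u1*v1+u2*v2)/(u1*u1+u2*u2)*u2) - (b2 + (u1*v1+u2*v2)/(v1*v1+v2*v2)*v2)) - ((b2 + ((v1*v1+v2*v2)-(u1*v1+u2*v2))/((u1*u1+u2*u2)+(v1*v1+v2*v2)-2*(u1*v1+u2*v2))*u2 + ((u1*u1+u2*u2)-(u1*v1+u2*v2))/((u1*u1+u2*u2)+(v1*v1+v2*v2)-2*(u1*v1+u2*v2))*v2) - (b2 + (u1*v1+u2*v2)/(v1*v1+v2*v2)*v2)) * ((b1 + (u1*v1+u2*v2)/(u1*u1+u2*u2)*u1)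 - (b1 + (u1*v1+u2*v2)/(v1*v1+v2*v2)*v1))
        = 2 * (-(u1*v1+u2*v2)) * ((u1*u1+u2*u2)-(u1*v1+u2*v2)) * ((v1*v1+v2*v2)-(u1*v1+u2*v2)) * (u1*v2 - u2*v1) / ((u1*u1+u2*u2)*(v1*v1+v2*v2)*((u1*u1+u2*u2)+(v1*v1+v2*v2)-2*(u1*v1+u2*v2))) := by
      field_simp (discharger := first | assumption | (apply ne_of_gt; nlinarith [hX, hY, hD]) | nlinarith [hX, hY, hD])
      ring
    rw [hval] at hcr
    have hnum : 2 * (-(u1*v1+u2*v2)) * ((u1*u1+u2*u2)-(u1*v1+u2*v2)) * ((v1*v1+v2*v2)-(u1*v1+u2*v2)) * (u1*v2 - u2*v1) ≠ 0 :=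
      mul_ne_zero (ne_of_gt (mul_pos (mul_pos (mul_pos two_pos (by linarith)) hXP) hYP)) hk
    exact hnum (by
      have := div_eq_zero_iff.1 hcr
      rcases this with h | h
      · exact h
      · exact absurd h (mul_ne_zero (mul_ne_zero hX0 hY0) hD0))
  · rw [hAf, hBf, hCf]
    unfold incenter
    rw [h1, h2, h3]
    have hs : 0 < ((u1*u1+u2*u2)-(u1*v1+u2*v2))*b/(a*e) + (-(u1*v1+u2*v2))*e/(a*b) + ((v1*v1+v2*v2)-(u1*v1+u2*v2))*a/(b*e) := by linarith
    rw [inv_smul_eq_iff₀ (ne_of_gt hs)]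
    refine Prod.ext ?_ ?_ <;>
      simp only [Prod.smul_mk, Prod.mk_add_mk, smul_eq_mul] <;>
      rw [← he, ← ha, ← hb] <;> (field_simp; ring)


/-- For a triangle `ABC` obtuse at `B`, the feet `A′, B′, C′` of the altitudes
are affinely independent and the incenter of the orthic triangle `A′B′C′` is
pinned to the obtuse vertex `B`. -/
theorem stmt_8 (A B C : ℝ × ℝ)
    (hind : AffineIndependent ℝ ![A, B, C])
    (hB : dot (A - B) (C - B) < 0)
    (A' B' C' : ℝ × ℝ)
    (hA' : A' = projLine A B C) (hB' : B' = projLine B A C)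
    (hC' : C' = projLine C A B) :
    AffineIndependent ℝ ![A', B', C'] ∧ incenter A' B' C' = B := by
  obtain ⟨a1, a2⟩ := A
  obtain ⟨b1, b2⟩ := B
  obtain ⟨c1, c2⟩ := C
  have hncol : ¬ Collinear ℝ ({(a1, a2), (b1, b2), (c1, c2)} : Set (ℝ × ℝ)) :=
    affineIndependent_iff_not_collinear_set.1 hind
  have hk : (a1 - b1) * (c2 - b2) - (a2 - b2) * (c1 - b1) ≠ 0 := by
    intro h
    apply hncol
    rw [Set.insert_comm]
    exact (collinear3 (b1, b2) (a1, a2) (c1, c2)).2 h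
  have hp : (a1 - b1) * (c1 - b1) + (a2 - b2) * (c2 - b2) < 0 := by
    simpa [dot] using hB
  obtain ⟨h₁, h₂⟩ := orthic_main b1 b2 (a1 - b1) (a2 - b2) (c1 - b1) (c2 - b2) hk hp
  have e1 : (b1 + (a1 - b1), b2 + (a2 - b2)) = (a1, a2) := by norm_num
  have e2 : (b1 + (c1 - b1), b2 + (c2 - b2)) = (c1, c2) := by norm_num
  rw [e1, e2] at h₁ h₂
  rw [hA', hB', hC']
  exact ⟨h₁, h₂⟩
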